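/- arXiv:2312.12406 — 2 statements merged into one kernel-verified Lean document; each statement's English description precedes it below -/
import Mathlib

section
/- Let (X, 𝒳, μ, T) be an ergodic measure-preserving system with μ non-atomic and let (𝒫⁽ⁿ⁾)ₙ∈ℕ be a sequence of Kakutani–Rokhlin partitions of (X, 𝒳, μ, T) satisfying (KR1)–(KR4), with d⁽ⁿ⁾ towers at level n. Then the following are equivalent: (i) (X, 𝒳, μ, T) is rigid (i.e. 1-rigid); (ii) there exists a sequence (w(n))ₙ∈ℕ of complete words, where w(n) is a complete word over {1,…,d⁽ⁿ⁾}, such that limsup_{n→∞} μ(𝒯⁽ⁿ⁾_{[w(n)]ₙ}) = 1. -/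
open MeasureTheory Filter Set

section Rigidity

variable {X : Type*} [MeasurableSpace X]

/-- The system `(X, μ, T)` is `γ`-rigid along the increasing sequence `n` of positive
integers: `liminf_k μ(A ∩ T^{-n_k} A) ≥ γ μ(A)` for every measurable set `A`. -/
def IsPartiallyRigidSeq (μ : Measure X) (T : X → X) (γ : ℝ) (n : ℕ → ℕ) : Prop :=
  StrictMono n ∧ 0 < n 0 ∧
    ∀ A : Set X, MeasurableSet A →
      ENNReal.ofReal γ * μ A ≤ Filter.liminf (fun k => μ (A ∩ T^[n k] ⁻¹' A)) Filter.atTop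

/-- The system `(X, μ, T)` is `γ`-rigid. -/
def IsPartiallyRigid (μ : Measure X) (T : X → X) (γ : ℝ) : Prop :=
  ∃ n : ℕ → ℕ, IsPartiallyRigidSeq μ T γ n

/-- The partial rigidity rate `δ_μ`: the supremum of the constants `γ ∈ (0,1]` for which
the system is `γ`-rigid (`0`, by convention on `sSup ∅`, if the system is not partially
rigid). -/
noncomputable def partialRigidityRate (μ : Measure X) (T : X → X) : ℝ :=
  sSup {γ : ℝ | γ ∈ Set.Ioc (0 : ℝ) 1 ∧ IsPartiallyRigid μ T γ}

end Rigidity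

/-- A word is complete if it has length at least 2 and its first and last letters
coincide. -/
def IsCompleteWord {α : Type*} (w : List α) : Prop :=
  2 ≤ w.length ∧ w.head? = w.getLast?

/-- A Kakutani–Rokhlin partition of `X` for the transformation `T`: towers indexed by
`Fin d`, with measurable bases `B a` and heights `h a`; the floors `T^j(B a)`,
`0 ≤ j < h a`, are pairwise disjoint and cover `X`. -/
structure KRPartition (X : Type*) [MeasurableSpace X] (T : X → X) where
  d : ℕ
  B : Fin d → Set X
  h : Fin d → ℕ
  h_pos : ∀ a, 0 < h a
  meas : ∀ a, MeasurableSet (B a)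
  disj : ∀ (a a' : Fin d) (j j' : ℕ), j < h a → j' < h a' →
    (a, j) ≠ (a', j') → Disjoint (T^[j] '' B a) (T^[j'] '' B a')
  cover : (⋃ a : Fin d, ⋃ j ∈ Finset.range (h a), T^[j] '' B a) = Set.univ

namespace KRPartition

variable {X : Type*} [MeasurableSpace X] {T : X → X}

/-- The base `B = ⋃ₐ Bₐ` of the partition. -/
def base (P : KRPartition X T) : Set X := ⋃ a, P.B a

/-- The tower `𝒯ₐ = ⋃_{0 ≤ j < hₐ} T^j(Bₐ)`. -/
def tower (P : KRPartition X T) (a : Fin P.d) : Set X :=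
  ⋃ j ∈ Finset.range (P.h a), T^[j] '' P.B a

/-- The atoms of the partition are the floors `T^j(Bₐ)`, `0 ≤ j < hₐ`. -/
def IsAtom (P : KRPartition X T) (s : Set X) : Prop :=
  ∃ (a : Fin P.d) (j : ℕ), j < P.h a ∧ s = T^[j] '' P.B a

/-- `B_w` for a word `w`: points `x` with `T^{h_{w₁}+⋯+h_{w_{i-1}}} x ∈ B_{w_i}` for
every `1 ≤ i ≤ |w|`. -/
def wordBase (P : KRPartition X T) (w : List (Fin P.d)) : Set X :=
  {x | ∀ i : Fin w.length, T^[((w.take i).map P.h).sum] x ∈ P.B (w.get i)}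

/-- The subtower `𝒯_w = ⋃_{0 ≤ j < h_{w₁}} T^j(B_w)` generated by the word `w`. -/
def wordTower (P : KRPartition X T) (w : List (Fin P.d)) : Set X :=
  ⋃ j ∈ Finset.range ((w.map P.h).headD 0), T^[j] '' P.wordBase w

/-- The sum `h_{w₁} + ⋯ + h_{w_{ℓ-1}}` of the heights of all but the last letter. -/
def wordSum (P : KRPartition X T) (w : List (Fin P.d)) : ℕ :=
  (w.dropLast.map P.h).sum

/-- The union `𝒯_{[w]} = ⋃_{u ∼ w} 𝒯_u` over all complete words `u` equivalent to
`w` (same sum of heights of all but the last letter). -/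
def classTower (P : KRPartition X T) (w : List (Fin P.d)) : Set X :=
  ⋃ u ∈ {u : List (Fin P.d) | IsCompleteWord u ∧ P.wordSum u = P.wordSum w},
    P.wordTower u

end KRPartition

/-- A sequence of Kakutani–Rokhlin partitions with `𝒫⁽⁰⁾ = {X}` satisfying
(KR1)–(KR4). -/
structure KRSequence (X : Type*) [m : MeasurableSpace X] (μ : Measure X) (T : X → X) where
  P : ℕ → KRPartition X T
  d_zero : (P 0).d = 1
  h_zero : ∀ a, (P 0).h a = 1
  B_zero : ∀ a, (P 0).B a = Set.univ
  kr1 : ∀ n, (P (n + 1)).base ⊆ (P n).base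
  kr2 : ∀ n s, (P (n + 1)).IsAtom s → ∃ t, (P n).IsAtom t ∧ s ⊆ t
  kr3 : Filter.Tendsto (fun n => μ (P n).base) Filter.atTop (nhds 0)
  kr4 : MeasurableSpace.generateFrom {s : Set X | ∃ n, (P n).IsAtom s} = m



/-! ### Auxiliary lemmas -/

section Aux

open MeasureTheory Filter Set ENNReal

namespace KRPartition

variable {X : Type*} [MeasurableSpace X] {T : X → X}

variable (P : KRPartition X T)

lemma exists_floor (x : X) : ∃ a j, j < P.h a ∧ x ∈ T^[j] '' P.B a := by
  have hx : x ∈ (⋃ a, ⋃ j ∈ Finset.range (P.h a), T^[j] '' P.B a) := P.cover ▸ mem_univ x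
  simp only [mem_iUnion, Finset.mem_range] at hx
  obtain ⟨a, j, hj, h⟩ := hx
  exact ⟨a, j, hj, h⟩

lemma floor_unique {a a' : Fin P.d} {j j' : ℕ} (hj : j < P.h a) (hj' : j' < P.h a') {x : X}
    (h1 : x ∈ T^[j] '' P.B a) (h2 : x ∈ T^[j'] '' P.B a') : a = a' ∧ j = j' := by
  by_contra hc
  have hne : (a, j) ≠ (a', j') := by
    rw [Ne, Prod.ext_iff]; exact hc
  exact Set.disjoint_left.mp (P.disj a a' j j' hj hj' hne) h1 h2

lemma stack (hT : Function.Injective T) {a : Fin P.d} {x : X} (hx : x ∈ P.B a) :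
    ∃ b, T^[P.h a] x ∈ P.B b := by
  obtain ⟨a', j', hj', hmem⟩ := P.exists_floor (T^[P.h a] x)
  rcases Nat.eq_zero_or_pos j' with h0 | hpos
  · exact ⟨a', by simpa [h0] using hmem⟩
  · exfalso
    obtain ⟨z, hz, hzeq⟩ := hmem
    have hha := P.h_pos a
    obtain ⟨k, rfl⟩ : ∃ k, j' = k + 1 := ⟨j' - 1, by omega⟩
    obtain ⟨g, hg⟩ : ∃ g, P.h a = g + 1 := ⟨P.h a - 1, by omega⟩
    rw [hg] at hzeq
    have heq' : T (T^[k] z) = T (T^[g] x) := by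
      rw [← Function.iterate_succ_apply' T k z, ← Function.iterate_succ_apply' T g x]
      exact hzeq
    have heq := hT heq'
    have h1 : T^[k] z ∈ T^[k] '' P.B a' := mem_image_of_mem _ hz
    have h2 : T^[k] z ∈ T^[g] '' P.B a := heq ▸ mem_image_of_mem _ hx
    obtain ⟨ha, hj⟩ := P.floor_unique (by omega) (by rw [hg]; omega) h1 h2
    subst ha
    omega

lemma mem_wordBase_cons {a : Fin P.d} {u : List (Fin P.d)} {x : X} :
    x ∈ P.wordBase (a :: u) ↔ x ∈ P.B a ∧ T^[P.h a] x ∈ P.wordBase u := by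
  constructor
  · intro hx
    constructor
    · simpa using hx ⟨0, by simp⟩
    · intro i
      have := hx ⟨i.1 + 1, by simpa using Nat.succ_lt_succ i.2⟩
      simpa [List.take_succ_cons, Nat.add_comm (P.h a), Function.iterate_add_apply] using this
  · rintro ⟨h1, h2⟩ i
    match i with
    | ⟨0, _⟩ => simpa using h1
    | ⟨i + 1, hi⟩ =>
      have := h2 ⟨i, by simpa using Nat.lt_of_succ_lt_succ hi⟩
      simpa [List.take_succ_cons, Nat.add_comm (P.h a), Function.iterate_add_apply] using this

lemma mem_wordBase_singleton {b : Fin P.d} {x : X} : x ∈ P.wordBase [b] ↔ x ∈ P.B b := by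
  constructor
  · intro hx; simpa using hx ⟨0, by simp⟩
  · intro hx i
    match i with
    | ⟨0, _⟩ => simpa using hx

lemma wordSum_cons {a : Fin P.d} {u : List (Fin P.d)} (hu : u ≠ []) :
    P.wordSum (a :: u) = P.h a + P.wordSum u := by
  unfold wordSum
  rw [List.dropLast_cons_of_ne_nil hu]
  simp

lemma wordSum_pair (a b : Fin P.d) : P.wordSum [a, b] = P.h a := by
  unfold wordSum; simp

end KRPartition

namespace KRPartition

variable {X : Type*} [MeasurableSpace X] {T : X → X} (P : KRPartition X T)

/-- The set of points lying in some floor whose image under `T^[m]` lies in the same floor. -/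
def sameFloor (P : KRPartition X T) (m : ℕ) : Set X :=
  ⋃ a : Fin P.d, ⋃ j ∈ Finset.range (P.h a),
    (T^[j] '' P.B a ∩ T^[m] ⁻¹' (T^[j] '' P.B a))

lemma mem_sameFloor {m : ℕ} {x : X} : x ∈ P.sameFloor m ↔
    ∃ a j, j < P.h a ∧ x ∈ T^[j] '' P.B a ∧ T^[m] x ∈ T^[j] '' P.B a := by
  simp only [sameFloor, mem_iUnion, Finset.mem_range, mem_inter_iff, mem_preimage]
  tauto

lemma read (hT : Function.Injective T) :
    ∀ m, 0 < m → ∀ (x : X) (a b : Fin P.d), x ∈ P.B a → T^[m] x ∈ P.B b →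
    ∃ u : List (Fin P.d), 2 ≤ u.length ∧ u.head? = some a ∧ u.getLast? = some b ∧
      P.wordSum u = m ∧ x ∈ P.wordBase u := by
  intro m
  induction m using Nat.strong_induction_on with
  | _ m IH =>
  intro hm x a b hxa hxb
  have hha := P.h_pos a
  have hm_ge : P.h a ≤ m := by
    by_contra hlt
    push_neg at hlt
    have h1 : T^[m] x ∈ T^[m] '' P.B a := mem_image_of_mem _ hxa
    have h2 : T^[m] x ∈ T^[0] '' P.B b := by simpa using hxb
    obtain ⟨-, hj⟩ := P.floor_unique hlt (P.h_pos b) h1 h2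
    omega
  rcases eq_or_lt_of_le hm_ge with heq | hlt
  · refine ⟨[a, b], by simp, by simp, by simp, by rw [P.wordSum_pair, heq], ?_⟩
    rw [P.mem_wordBase_cons]
    refine ⟨hxa, ?_⟩
    rw [P.mem_wordBase_singleton, heq]
    exact hxb
  · obtain ⟨a', hy⟩ := P.stack hT hxa
    have hmm : m - P.h a < m := by omega
    have hmt : T^[m - P.h a] (T^[P.h a] x) = T^[m] x := by
      rw [← Function.iterate_add_apply]
      congr 1; omega
    obtain ⟨u', hlen, hhead, hlast, hsum, hwb⟩ :=
      IH (m - P.h a) hmm (by omega) (T^[P.h a] x) a' b hy (by rw [hmt]; exact hxb)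
    have hu' : u' ≠ [] := by intro h; simp [h] at hlen
    refine ⟨a :: u', ?_, by simp, ?_, ?_, ?_⟩
    · simp; omega
    · cases u' with
      | nil => exact absurd rfl hu'
      | cons c tl => rw [List.getLast?_cons_cons]; exact hlast
    · rw [P.wordSum_cons hu', hsum]; omega
    · rw [P.mem_wordBase_cons]; exact ⟨hxa, hwb⟩

lemma wordSum_pos {u : List (Fin P.d)} (hlen : 2 ≤ u.length) : 0 < P.wordSum u := by
  match u, hlen with
  | a :: b :: tl, _ =>
    have h1 : P.wordSum (a :: b :: tl) = P.h a + P.wordSum (b :: tl) := P.wordSum_cons (by simp)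
    have h2 := P.h_pos a
    omega

lemma wordBase_head {u : List (Fin P.d)} (hu : u ≠ []) {z : X} (hz : z ∈ P.wordBase u) :
    z ∈ P.B (u.head hu) := by
  cases u with
  | nil => exact absurd rfl hu
  | cons c tl => exact ((P.mem_wordBase_cons).mp hz).1

lemma wordBase_last {u : List (Fin P.d)} (hu : u ≠ []) (hlen : 2 ≤ u.length) {z : X}
    (hz : z ∈ P.wordBase u) : T^[P.wordSum u] z ∈ P.B (u.getLast hu) := by
  have hidx : u.length - 1 < u.length := by
    cases u with
    | nil => exact absurd rfl hu
    | cons c tl => simp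
  have hmem := hz ⟨u.length - 1, hidx⟩
  have htake : u.take (u.length - 1) = u.dropLast := u.dropLast_eq_take.symm
  rw [htake] at hmem
  have hget : u.get ⟨u.length - 1, hidx⟩ = u.getLast hu := by
    rw [List.getLast_eq_getElem]
    simp
  rw [hget] at hmem
  exact hmem

lemma classTower_subset_sameFloor {w : List (Fin P.d)} :
    P.classTower w ⊆ P.sameFloor (P.wordSum w) := by
  intro x hx
  simp only [classTower, mem_iUnion, mem_setOf_eq] at hx
  obtain ⟨u, ⟨⟨hlen, hcw⟩, hsum⟩, hxu⟩ := hx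
  simp only [wordTower, mem_iUnion, Finset.mem_range] at hxu
  obtain ⟨j, hj, z, hz, rfl⟩ := hxu
  have hne : u ≠ [] := by intro h; simp [h] at hlen
  have hhead := P.wordBase_head hne hz
  have hlast := P.wordBase_last hne hlen hz
  have hgl : u.getLast hne = u.head hne := by
    have h1 : u.head? = some (u.head hne) := List.head?_eq_head hne
    have h2 : u.getLast? = some (u.getLast hne) := List.getLast?_eq_getLast hne
    rw [h1, h2] at hcw
    exact (Option.some.inj hcw).symm
  rw [hgl] at hlast
  have hjh : j < P.h (u.head hne) := by
    cases u with
    | nil => exact absurd rfl hne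
    | cons c tl => simpa using hj
  rw [P.mem_sameFloor]
  refine ⟨u.head hne, j, hjh, mem_image_of_mem _ hhead, ?_⟩
  have hcomm : T^[P.wordSum u] (T^[j] z) = T^[j] (T^[P.wordSum u] z) := by
    rw [← Function.iterate_add_apply, ← Function.iterate_add_apply, Nat.add_comm]
  rw [← hsum, hcomm]
  exact mem_image_of_mem _ hlast

lemma sameFloor_subset_classTower (hT : Function.Injective T) {w : List (Fin P.d)}
    (hw : IsCompleteWord w) : P.sameFloor (P.wordSum w) ⊆ P.classTower w := by
  intro x hx
  rw [P.mem_sameFloor] at hx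
  obtain ⟨a, j, hj, ⟨y, hy, rfl⟩, hmx⟩ := hx
  obtain ⟨y', hy', hyeq⟩ := hmx
  have hiter : T^[j] (T^[P.wordSum w] y) = T^[j] y' := by
    rw [hyeq, ← Function.iterate_add_apply, ← Function.iterate_add_apply, Nat.add_comm j (P.wordSum w)]
  have hmy : T^[P.wordSum w] y ∈ P.B a := by
    rw [hT.iterate j hiter]; exact hy'
  obtain ⟨u, hlen, hhead, hlast, hsum, hwb⟩ :=
    P.read hT (P.wordSum w) (P.wordSum_pos hw.1) y a a hy hmy
  simp only [classTower, mem_iUnion, mem_setOf_eq]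
  refine ⟨u, ⟨⟨hlen, by rw [hhead, hlast]⟩, hsum⟩, ?_⟩
  simp only [wordTower, mem_iUnion, Finset.mem_range]
  refine ⟨j, ?_, mem_image_of_mem _ hwb⟩
  cases u with
  | nil => simp at hlen
  | cons c tl =>
    have : c = a := by simpa using hhead
    simpa [this] using hj

/-- Existence of a complete word with a given word sum, given a point of `sameFloor`. -/
lemma exists_complete_word (hT : Function.Injective T) {m : ℕ} (hm : 0 < m)
    {x : X} (hx : x ∈ P.sameFloor m) :
    ∃ w : List (Fin P.d), IsCompleteWord w ∧ P.wordSum w = m := by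
  rw [P.mem_sameFloor] at hx
  obtain ⟨a, j, hj, ⟨y, hy, rfl⟩, hmx⟩ := hx
  obtain ⟨y', hy', hyeq⟩ := hmx
  have hiter : T^[j] (T^[m] y) = T^[j] y' := by
    rw [hyeq, ← Function.iterate_add_apply, ← Function.iterate_add_apply, Nat.add_comm j m]
  have hmy : T^[m] y ∈ P.B a := by
    rw [hT.iterate j hiter]; exact hy'
  obtain ⟨u, hlen, hhead, hlast, hsum, -⟩ := P.read hT m hm y a a hy hmy
  exact ⟨u, ⟨hlen, by rw [hhead, hlast]⟩, hsum⟩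

end KRPartition

namespace KRPartition

variable {X : Type*} [MeasurableSpace X] {T Ti : X → X} (P : KRPartition X T)

lemma image_iterate_eq (hL : Function.LeftInverse Ti T) (hR : Function.RightInverse Ti T)
    (j : ℕ) (s : Set X) : T^[j] '' s = Ti^[j] ⁻¹' s :=
  congrFun (Set.image_eq_preimage_of_inverse (hL.iterate j) (hR.iterate j)) s

lemma floor_meas (hTi : Measurable Ti) (hL : Function.LeftInverse Ti T)
    (hR : Function.RightInverse Ti T) (a : Fin P.d) (j : ℕ) :
    MeasurableSet (T^[j] '' P.B a) := by
  rw [image_iterate_eq hL hR]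
  exact (hTi.iterate j) (P.meas a)

lemma wordBase_eq (w : List (Fin P.d)) :
    P.wordBase w = ⋂ i : Fin w.length, T^[((w.take i).map P.h).sum] ⁻¹' P.B (w.get i) := by
  ext x
  simp only [wordBase, mem_setOf_eq, mem_iInter, mem_preimage]

lemma wordBase_meas (hT : Measurable T) (w : List (Fin P.d)) :
    MeasurableSet (P.wordBase w) := by
  rw [P.wordBase_eq]
  exact MeasurableSet.iInter fun i => (hT.iterate _) (P.meas _)

lemma wordTower_meas (hT : Measurable T) (hTi : Measurable Ti)
    (hL : Function.LeftInverse Ti T) (hR : Function.RightInverse Ti T)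
    (w : List (Fin P.d)) : MeasurableSet (P.wordTower w) := by
  refine Finset.measurableSet_biUnion _ fun j _ => ?_
  rw [image_iterate_eq hL hR]
  exact (hTi.iterate j) (P.wordBase_meas hT w)

lemma classTower_meas (hT : Measurable T) (hTi : Measurable Ti)
    (hL : Function.LeftInverse Ti T) (hR : Function.RightInverse Ti T)
    (w : List (Fin P.d)) : MeasurableSet (P.classTower w) := by
  refine MeasurableSet.biUnion (Set.to_countable _) fun u _ => ?_
  exact P.wordTower_meas hT hTi hL hR u

lemma sameFloor_meas (hT : Measurable T) (hTi : Measurable Ti)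
    (hL : Function.LeftInverse Ti T) (hR : Function.RightInverse Ti T)
    (m : ℕ) : MeasurableSet (P.sameFloor m) := by
  refine MeasurableSet.iUnion fun a => Finset.measurableSet_biUnion _ fun j _ => ?_
  exact (P.floor_meas hTi hL hR a j).inter ((hT.iterate m) (P.floor_meas hTi hL hR a j))

lemma compl_sameFloor_subset (m : ℕ) :
    (P.sameFloor m)ᶜ ⊆ ⋃ a : Fin P.d, ⋃ j ∈ Finset.range (P.h a),
      (T^[j] '' P.B a \ T^[m] ⁻¹' (T^[j] '' P.B a)) := by
  intro x hx
  obtain ⟨a, j, hj, hmem⟩ := P.exists_floor x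
  simp only [mem_iUnion, Finset.mem_range]
  refine ⟨a, j, hj, hmem, fun hc => ?_⟩
  exact hx (P.mem_sameFloor.mpr ⟨a, j, hj, hmem, hc⟩)

lemma measure_compl_sameFloor_le (μ : Measure X) (m : ℕ) :
    μ (P.sameFloor m)ᶜ ≤ ∑ a : Fin P.d, ∑ j ∈ Finset.range (P.h a),
      μ (T^[j] '' P.B a \ T^[m] ⁻¹' (T^[j] '' P.B a)) := by
  refine le_trans (measure_mono (P.compl_sameFloor_subset m)) ?_
  refine le_trans (measure_iUnion_fintype_le μ _) ?_
  exact Finset.sum_le_sum fun a _ => measure_biUnion_finset_le (μ := μ) _ _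

end KRPartition

namespace KRPartition
variable {X : Type*} [MeasurableSpace X] {T Ti : X → X} (P : KRPartition X T)

lemma atom_meas (hTi : Measurable Ti) (hL : Function.LeftInverse Ti T)
    (hR : Function.RightInverse Ti T) {s : Set X} (hs : P.IsAtom s) : MeasurableSet s := by
  obtain ⟨a, j, _, rfl⟩ := hs
  exact P.floor_meas hTi hL hR a j

lemma atom_unique {s s' : Set X} (hs : P.IsAtom s) (hs' : P.IsAtom s') {x : X}
    (hx : x ∈ s) (hx' : x ∈ s') : s = s' := by
  obtain ⟨a, j, hj, rfl⟩ := hs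
  obtain ⟨a', j', hj', rfl⟩ := hs'
  obtain ⟨ha, hjj⟩ := P.floor_unique hj hj' hx hx'
  rw [ha, hjj]

lemma mem_atom (x : X) : ∃ s, P.IsAtom s ∧ x ∈ s := by
  obtain ⟨a, j, hj, hx⟩ := P.exists_floor x
  exact ⟨_, ⟨a, j, hj, rfl⟩, hx⟩

end KRPartition

open MeasureTheory

namespace KRSequence

variable {X : Type*} [MeasurableSpace X] {μ : Measure X} {T Ti : X → X} (K : KRSequence X μ T)

/-- `S` is a union of atoms of the `N`-th partition. -/
def Saturated (K : KRSequence X μ T) (N : ℕ) (S : Set X) : Prop :=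
  ∀ x ∈ S, ∀ s, (K.P N).IsAtom s → x ∈ s → s ⊆ S

lemma refine_atom : ∀ {N n : ℕ}, N ≤ n → ∀ {s : Set X}, (K.P n).IsAtom s →
    ∃ t, (K.P N).IsAtom t ∧ s ⊆ t := by
  intro N n hNn
  induction n, hNn using Nat.le_induction with
  | base => exact fun hs => ⟨_, hs, subset_rfl⟩
  | succ n hNn ih =>
    intro s hs
    obtain ⟨t, ht, hst⟩ := K.kr2 n s hs
    obtain ⟨t', ht', htt'⟩ := ih ht
    exact ⟨t', ht', hst.trans htt'⟩

lemma saturated_mono {N N' : ℕ} (h : N ≤ N') {S : Set X} (hS : K.Saturated N S) :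
    K.Saturated N' S := by
  intro x hx s hs hxs
  obtain ⟨t, ht, hst⟩ := K.refine_atom h hs
  exact hst.trans (hS x hx t ht (hst hxs))

lemma saturated_compl {N : ℕ} {S : Set X} (hS : K.Saturated N S) : K.Saturated N Sᶜ := by
  intro x hx s hs hxs y hy
  intro hyS
  exact hx (hS y hyS s hs hy hxs)

lemma saturated_biUnion {N : ℕ} {ι : Type*} (t : Finset ι) {S : ι → Set X}
    (hS : ∀ i ∈ t, K.Saturated N (S i)) : K.Saturated N (⋃ i ∈ t, S i) := by
  intro x hx s hs hxs
  simp only [Set.mem_iUnion] at hx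
  obtain ⟨i, hi, hxi⟩ := hx
  exact (hS i hi x hxi s hs hxs).trans (Set.subset_biUnion_of_mem hi)

/-- The point `T^[m] x` stays in `S` for `x ∈ S` in the same-floor set, `S` saturated. -/
lemma saturated_return {N n m : ℕ} (hNn : N ≤ n) {S : Set X} (hS : K.Saturated N S)
    {x : X} (hx : x ∈ S) (hsf : x ∈ (K.P n).sameFloor m) : T^[m] x ∈ S := by
  rw [KRPartition.mem_sameFloor] at hsf
  obtain ⟨a, j, hj, h1, h2⟩ := hsf
  obtain ⟨t, ht, hsub⟩ := K.refine_atom hNn ⟨a, j, hj, rfl⟩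
  exact hS x hx t ht (hsub h1) (hsub h2)

end KRSequence


namespace KRSequence

variable {X : Type*} [MeasurableSpace X] {μ : Measure X} {T Ti : X → X} (K : KRSequence X μ T)

lemma geom_tail_le (k : ℕ) : ∑ j ∈ Finset.range (k+1), ((2:ℝ≥0∞)^(j+2))⁻¹ ≤ 2⁻¹ := by
  have h1 : ∀ j : ℕ, ((2:ℝ≥0∞)^(j+2))⁻¹ = (2⁻¹:ℝ≥0∞)^j * (2⁻¹)^2 := by
    intro j
    rw [← ENNReal.inv_pow, ← ENNReal.inv_pow, ← ENNReal.mul_inv (by norm_num) (by norm_num), ← pow_add]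
  calc ∑ j ∈ Finset.range (k+1), ((2:ℝ≥0∞)^(j+2))⁻¹
      ≤ ∑' j : ℕ, ((2:ℝ≥0∞)^(j+2))⁻¹ := ENNReal.sum_le_tsum _
    _ = (∑' j : ℕ, (2⁻¹:ℝ≥0∞)^j) * (2⁻¹)^2 := by
        simp_rw [h1]; exact ENNReal.tsum_mul_right
    _ = 2 * (2⁻¹)^2 := by
        rw [ENNReal.tsum_geometric, ENNReal.one_sub_inv_two, inv_inv]
    _ = 2⁻¹ := by
        rw [pow_two, ← mul_assoc, ENNReal.mul_inv_cancel (by norm_num) (by norm_num), one_mul]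

lemma approx [IsFiniteMeasure μ] (hTi : Measurable Ti) (hL : Function.LeftInverse Ti T)
    (hR : Function.RightInverse Ti T) :
    ∀ A : Set X, MeasurableSet A → ∀ ε : ℝ≥0∞, ε ≠ 0 →
      ∃ N S, MeasurableSet S ∧ K.Saturated N S ∧ μ (symmDiff A S) ≤ ε := by
  have main : ∀ A : Set X,
      MeasurableSet[MeasurableSpace.generateFrom {s : Set X | ∃ n, (K.P n).IsAtom s}] A →
      (MeasurableSet A ∧ ∀ ε : ℝ≥0∞, ε ≠ 0 → ε ≠ ∞ →
        ∃ N S, MeasurableSet S ∧ K.Saturated N S ∧ μ (symmDiff A S) ≤ ε) := by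
    intro A hA
    induction A, hA using MeasurableSpace.generateFrom_induction with
    | hC t ht _ =>
      obtain ⟨n, hat⟩ := ht
      refine ⟨(K.P n).atom_meas hTi hL hR hat, fun ε hε _ => ⟨n, t, (K.P n).atom_meas hTi hL hR hat, ?_, by simp [symmDiff_self]⟩⟩
      intro x hx s hs hxs
      rw [(K.P n).atom_unique hs hat hxs hx]
    | empty =>
      exact ⟨MeasurableSet.empty, fun ε hε _ =>
        ⟨0, ∅, MeasurableSet.empty, fun x hx => absurd hx (notMem_empty x), by simp [symmDiff_self]⟩⟩
    | compl t ht iht =>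
      obtain ⟨htm, hap⟩ := iht
      refine ⟨htm.compl, fun ε hε hεt => ?_⟩
      obtain ⟨N, S, h1, h2, h3⟩ := hap ε hε hεt
      exact ⟨N, Sᶜ, h1.compl, K.saturated_compl h2, by rwa [compl_symmDiff_compl]⟩
    | iUnion f hfm ihf =>
      refine ⟨MeasurableSet.iUnion fun n => (ihf n).1, fun ε hε hεt => ?_⟩
      choose N S hSm hSsat hSd using fun i =>
        (ihf i).2 (ε / 2^(i+2))
          (by simp [ENNReal.div_eq_top, hε, hεt])
          (by simp [ENNReal.div_eq_top, hε, hεt])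
      have hAccm : ∀ k, MeasurableSet (Set.accumulate f k) :=
        fun k => MeasurableSet.biUnion (to_countable _) fun j _ => (ihf j).1
      have hAccsub : ∀ k, Set.accumulate f k ⊆ ⋃ i, f i := by
        intro k
        rw [← Set.iUnion_accumulate]
        exact subset_iUnion _ k
      have hD : Tendsto (fun k => μ (⋃ i, f i) - μ (Set.accumulate f k)) atTop (nhds 0) := by
        have h0 := tendsto_measure_iUnion_accumulate (μ := μ) (f := f)
        have := ENNReal.Tendsto.sub (tendsto_const_nhds (x := μ (⋃ i, f i))) h0
          (Or.inl (measure_ne_top μ _))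
        simpa [tsub_self] using this
      have hhalf : (0:ℝ≥0∞) < ε / 2 := ENNReal.div_pos hε (by norm_num)
      obtain ⟨k, hk⟩ := (hD.eventually_lt_const hhalf).exists
      have hdiffle : μ ((⋃ i, f i) \ Set.accumulate f k) ≤ ε / 2 := by
        rw [measure_diff (hAccsub k) (hAccm k).nullMeasurableSet (measure_ne_top μ _)]
        exact hk.le
      refine ⟨(Finset.range (k+1)).sup N, ⋃ j ∈ Finset.range (k+1), S j,
        Finset.measurableSet_biUnion _ fun j _ => hSm j,
        K.saturated_biUnion _ fun j hj => K.saturated_mono (Finset.le_sup hj) (hSsat j), ?_⟩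
      have key : symmDiff (⋃ i, f i) (⋃ j ∈ Finset.range (k+1), S j) ⊆
          ((⋃ i, f i) \ Set.accumulate f k) ∪ ⋃ j ∈ Finset.range (k+1), symmDiff (f j) (S j) := by
        intro x hx
        rw [Set.mem_symmDiff] at hx
        rcases hx with ⟨hxA, hxS⟩ | ⟨hxS, hxA⟩
        · by_cases hacc : x ∈ Set.accumulate f k
          · right
            obtain ⟨j, hj, hxj⟩ := Set.mem_accumulate.mp hacc
            simp only [mem_iUnion, Finset.mem_range] at hxS ⊢
            refine ⟨j, by omega, ?_⟩
            rw [Set.mem_symmDiff]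
            exact Or.inl ⟨hxj, fun hc => hxS ⟨j, by omega, hc⟩⟩
          · exact Or.inl ⟨hxA, hacc⟩
        · right
          simp only [mem_iUnion, Finset.mem_range] at hxS
          obtain ⟨j, hj, hxj⟩ := hxS
          simp only [mem_iUnion, Finset.mem_range]
          refine ⟨j, hj, ?_⟩
          rw [Set.mem_symmDiff]
          exact Or.inr ⟨hxj, fun hc => hxA (mem_iUnion.mpr ⟨j, hc⟩)⟩
      calc μ (symmDiff (⋃ i, f i) (⋃ j ∈ Finset.range (k+1), S j))
          ≤ μ (((⋃ i, f i) \ Set.accumulate f k) ∪ ⋃ j ∈ Finset.range (k+1), symmDiff (f j) (S j)) :=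
            measure_mono key
        _ ≤ μ ((⋃ i, f i) \ Set.accumulate f k) + μ (⋃ j ∈ Finset.range (k+1), symmDiff (f j) (S j)) :=
            measure_union_le _ _
        _ ≤ ε / 2 + ∑ j ∈ Finset.range (k+1), μ (symmDiff (f j) (S j)) :=
            add_le_add hdiffle (measure_biUnion_finset_le (μ := μ) _ _)
        _ ≤ ε / 2 + ∑ j ∈ Finset.range (k+1), ε / 2^(j+2) :=
            add_le_add_right (Finset.sum_le_sum fun j _ => hSd j) _
        _ ≤ ε / 2 + ε / 2 := by
            refine add_le_add_right ?_ _
            have : ∑ j ∈ Finset.range (k+1), ε / 2^(j+2)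
                = ε * ∑ j ∈ Finset.range (k+1), ((2:ℝ≥0∞)^(j+2))⁻¹ := by
              rw [Finset.mul_sum]
              exact Finset.sum_congr rfl fun j _ => by rw [div_eq_mul_inv]
            rw [this, ENNReal.div_eq_inv_mul, mul_comm (2⁻¹:ℝ≥0∞) ε]
            exact mul_le_mul_right (geom_tail_le k) ε
        _ = ε := ENNReal.add_halves ε
  intro A hA ε hε
  rcases eq_or_ne ε ∞ with rfl | hεt
  · exact ⟨0, ∅, MeasurableSet.empty, fun x hx => absurd hx (notMem_empty x), le_top⟩
  · have hA' : MeasurableSet[MeasurableSpace.generateFrom {s : Set X | ∃ n, (K.P n).IsAtom s}] A := by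
      rw [K.kr4]; exact hA
    exact (main A hA').2 ε hε hεt

end KRSequence


namespace KRPartition

variable {X : Type*} [MeasurableSpace X] {T Ti : X → X} (P : KRPartition X T)

lemma tendsto_measure_compl_sameFloor (μ : Measure X) [IsProbabilityMeasure μ]
    (hMP : MeasurePreserving T μ μ) (hTi : Measurable Ti)
    (hL : Function.LeftInverse Ti T) (hR : Function.RightInverse Ti T)
    {n : ℕ → ℕ}
    (hrig : ∀ A : Set X, MeasurableSet A →
      μ A ≤ liminf (fun k => μ (A ∩ T^[n k] ⁻¹' A)) atTop) :
    Tendsto (fun k => μ ((P.sameFloor (n k))ᶜ)) atTop (nhds 0) := by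
  have hfloor : ∀ (a : Fin P.d) (j : ℕ),
      Tendsto (fun k => μ (T^[j] '' P.B a \ T^[n k] ⁻¹' (T^[j] '' P.B a))) atTop (nhds 0) := by
    intro a j
    set F := T^[j] '' P.B a with hF
    have hFm : MeasurableSet F := P.floor_meas hTi hL hR a j
    have h1 : Tendsto (fun k => μ (F ∩ T^[n k] ⁻¹' F)) atTop (nhds (μ F)) := by
      refine tendsto_of_le_liminf_of_limsup_le (hrig F hFm) ?_
      exact limsup_le_of_le (by isBoundedDefault)
        (Eventually.of_forall fun k => measure_mono inter_subset_left)
    have heq : ∀ k, μ (F \ T^[n k] ⁻¹' F) = μ F - μ (F ∩ T^[n k] ⁻¹' F) := by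
      intro k
      have h2 : μ (F ∩ T^[n k] ⁻¹' F) + μ (F \ T^[n k] ⁻¹' F) = μ F :=
        measure_inter_add_diff F ((hMP.iterate (n k)).measurable hFm)
      rw [← h2, ENNReal.add_sub_cancel_left (measure_ne_top μ _)]
    have h3 := ENNReal.Tendsto.sub (tendsto_const_nhds (x := μ F)) h1 (Or.inl (measure_ne_top μ F))
    simp only [tsub_self] at h3
    simp_rw [heq]
    exact h3
  have hsum : Tendsto (fun k => ∑ a : Fin P.d, ∑ j ∈ Finset.range (P.h a),
      μ (T^[j] '' P.B a \ T^[n k] ⁻¹' (T^[j] '' P.B a))) atTop (nhds 0) := by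
    have h0 : (0:ℝ≥0∞) = ∑ a : Fin P.d, ∑ j ∈ Finset.range (P.h a), (0:ℝ≥0∞) := by simp
    rw [h0]
    exact tendsto_finset_sum _ fun a _ => tendsto_finset_sum _ fun j _ => hfloor a j
  refine tendsto_of_tendsto_of_tendsto_of_le_of_le tendsto_const_nhds hsum
    (fun k => zero_le) (fun k => P.measure_compl_sameFloor_le μ (n k))

end KRPartition

namespace KRSequence

variable {X : Type*} [MeasurableSpace X] {μ : Measure X} {T Ti : X → X} (K : KRSequence X μ T)

lemma key_est (hMP : MeasurePreserving T μ μ) {A S : Set X} (hAm : MeasurableSet A)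
    (hSm : MeasurableSet S) {N n m : ℕ} (hNn : N ≤ n) (hS : K.Saturated N S) :
    μ A ≤ μ (A ∩ T^[m] ⁻¹' A) + 3 * μ (symmDiff A S) + μ (((K.P n).sameFloor m)ᶜ) := by
  set E := (K.P n).sameFloor m with hE
  have hdS : μ (S \ A) ≤ μ (symmDiff A S) := by
    rw [Set.symmDiff_def]
    exact measure_mono subset_union_right
  have hdA : μ (A \ S) ≤ μ (symmDiff A S) := by
    rw [Set.symmDiff_def]
    exact measure_mono subset_union_left
  have step1 : μ A ≤ μ (A \ S) + μ S := by
    rw [add_comm]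
    exact (measure_le_inter_add_diff μ A S).trans
      (add_le_add_left (measure_mono inter_subset_right) _)
  have step2 : μ S ≤ μ (S ∩ E) + μ Eᶜ :=
    (measure_le_inter_add_diff μ S E).trans
      (add_le_add_right (measure_mono (diff_subset_compl _ _)) _)
  have step3 : S ∩ E ⊆ (A ∩ T^[m] ⁻¹' A) ∪ ((S \ A) ∪ T^[m] ⁻¹' (S \ A)) := by
    rintro x ⟨hxS, hxE⟩
    have hTx : T^[m] x ∈ S := K.saturated_return hNn hS hxS hxE
    by_cases hxA : x ∈ A
    · by_cases hTxA : T^[m] x ∈ A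
      · exact Or.inl ⟨hxA, hTxA⟩
      · exact Or.inr (Or.inr ⟨hTx, hTxA⟩)
    · exact Or.inr (Or.inl ⟨hxS, hxA⟩)
  have step4 : μ (S ∩ E) ≤ μ (A ∩ T^[m] ⁻¹' A) + (μ (S \ A) + μ (S \ A)) := by
    refine (measure_mono step3).trans ?_
    refine (measure_union_le _ _).trans (add_le_add_right ?_ _)
    refine (measure_union_le _ _).trans (add_le_add_right ?_ _)
    exact le_of_eq ((hMP.iterate m).measure_preimage (hSm.diff hAm).nullMeasurableSet)
  calc μ A ≤ μ (A \ S) + μ S := step1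
    _ ≤ μ (A \ S) + (μ (S ∩ E) + μ Eᶜ) := add_le_add_right step2 _
    _ ≤ μ (A \ S) + (μ (A ∩ T^[m] ⁻¹' A) + (μ (S \ A) + μ (S \ A)) + μ Eᶜ) :=
        add_le_add_right (add_le_add_left step4 _) _
    _ = μ (A ∩ T^[m] ⁻¹' A) + (μ (A \ S) + μ (S \ A) + μ (S \ A)) + μ Eᶜ := by ring
    _ ≤ μ (A ∩ T^[m] ⁻¹' A) + 3 * μ (symmDiff A S) + μ Eᶜ := by
        refine add_le_add_left (add_le_add_right ?_ _) _
        calc μ (A \ S) + μ (S \ A) + μ (S \ A)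
            ≤ μ (symmDiff A S) + μ (symmDiff A S) + μ (symmDiff A S) :=
              add_le_add (add_le_add hdA hdS) hdS
          _ = 3 * μ (symmDiff A S) := by ring

end KRSequence

end Aux

open MeasureTheory Filter Set ENNReal in
/-- Rigidity characterization: the system is rigid (1-rigid) iff there is a sequence of
complete words `(w(n))ₙ` with `limsup_n μ(𝒯⁽ⁿ⁾_{[w(n)]ₙ}) = 1`. -/
theorem kr_characterization_of_rigidity
    {X : Type*} [MeasurableSpace X] [StandardBorelSpace X]
    (μ : Measure X) [IsProbabilityMeasure μ] (T : X → X)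
    (herg : Ergodic T μ)
    (hinv : ∃ Tinv : X → X, Measurable Tinv ∧
      Function.LeftInverse Tinv T ∧ Function.RightInverse Tinv T)
    (hna : ∀ x : X, μ {x} = 0)
    (K : KRSequence X μ T) :
    IsPartiallyRigid μ T 1 ↔
      ∃ w : (n : ℕ) → List (Fin (K.P n).d),
        (∀ n, IsCompleteWord (w n)) ∧
        Filter.limsup (fun n => μ ((K.P n).classTower (w n))) Filter.atTop = 1 := by
  obtain ⟨Ti, hTim, hL, hR⟩ := hinv
  have hMP : MeasurePreserving T μ μ := herg.toMeasurePreserving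
  have hTm : Measurable T := hMP.measurable
  have hTinj : Function.Injective T := hL.injective
  constructor
  · -- rigid → words
    rintro ⟨n, hsm, hn0, hrig⟩
    have hrig' : ∀ A : Set X, MeasurableSet A →
        μ A ≤ liminf (fun k => μ (A ∩ T^[n k] ⁻¹' A)) atTop := by
      intro A hA
      simpa using hrig A hA
    have hnpos : ∀ k, 0 < n k := fun k => lt_of_lt_of_le hn0 (hsm.monotone (Nat.zero_le k))
    have hex : ∀ ℓ : ℕ, ∃ w : List (Fin (K.P ℓ).d), IsCompleteWord w ∧
        1 - ((ℓ : ℝ≥0∞) + 2)⁻¹ ≤ μ ((K.P ℓ).classTower w) := by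
      intro ℓ
      set η : ℝ≥0∞ := ((ℓ : ℝ≥0∞) + 2)⁻¹ with hη
      have hηt : η ≠ ∞ := by
        simp [hη, ENNReal.inv_ne_top]
      have hηpos : (0:ℝ≥0∞) < η := by
        rw [hη]
        exact ENNReal.inv_pos.mpr (by simp)
      have hηlt1 : η < 1 := by
        rw [hη]
        rw [ENNReal.inv_lt_one]
        exact lt_of_lt_of_le one_lt_two (by simp)
      have htd := (K.P ℓ).tendsto_measure_compl_sameFloor μ hMP hTim hL hR hrig'
      obtain ⟨k, hk⟩ := (htd.eventually_lt_const hηpos).exists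
      set E := (K.P ℓ).sameFloor (n k) with hEdef
      have hEm : MeasurableSet E := (K.P ℓ).sameFloor_meas hTm hTim hL hR (n k)
      have hElb : 1 - η ≤ μ E := by
        have h1 : (1:ℝ≥0∞) ≤ μ E + μ Eᶜ := by
          rw [← measure_univ (μ := μ), ← union_compl_self E]
          exact measure_union_le E Eᶜ
        exact tsub_le_iff_right.mpr (h1.trans (add_le_add_right hk.le _))
      have hEne : E.Nonempty := by
        rw [nonempty_iff_ne_empty]
        intro h
        rw [h] at hElb
        simp only [measure_empty, nonpos_iff_eq_zero] at hElb
        rw [tsub_eq_zero_iff_le] at hElb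
        exact absurd hElb (not_le.mpr hηlt1)
      obtain ⟨x, hx⟩ := hEne
      obtain ⟨w, hwc, hwsum⟩ := (K.P ℓ).exists_complete_word hTinj (hnpos k) hx
      refine ⟨w, hwc, hElb.trans (measure_mono ?_)⟩
      have := (K.P ℓ).sameFloor_subset_classTower hTinj hwc
      rw [hwsum] at this
      exact this
    choose w hwc hwm using hex
    refine ⟨w, hwc, ?_⟩
    have hub : ∀ ℓ, μ ((K.P ℓ).classTower (w ℓ)) ≤ 1 := fun ℓ => prob_le_one
    have hz : Tendsto (fun ℓ : ℕ => ((ℓ : ℝ≥0∞) + 2)⁻¹) atTop (nhds 0) := by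
      refine tendsto_of_tendsto_of_tendsto_of_le_of_le tendsto_const_nhds
        ENNReal.tendsto_inv_nat_nhds_zero (fun ℓ => zero_le) (fun ℓ => ?_)
      exact ENNReal.inv_le_inv' (by simp)
    have htd1 : Tendsto (fun ℓ : ℕ => 1 - ((ℓ : ℝ≥0∞) + 2)⁻¹) atTop (nhds 1) := by
      have := ENNReal.Tendsto.sub (tendsto_const_nhds (x := (1:ℝ≥0∞))) hz (Or.inl one_ne_top)
      simpa using this
    exact (tendsto_of_tendsto_of_tendsto_of_le_of_le htd1 tendsto_const_nhds hwm hub).limsup_eq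
  · -- words → rigid
    rintro ⟨w, hwc, hlimsup⟩
    set m : ℕ → ℕ := fun ℓ => (K.P ℓ).wordSum (w ℓ) with hmdef
    have hmpos : ∀ ℓ, 0 < m ℓ := fun ℓ => (K.P ℓ).wordSum_pos (hwc ℓ).1
    have hCm : ∀ ℓ, MeasurableSet ((K.P ℓ).classTower (w ℓ)) :=
      fun ℓ => (K.P ℓ).classTower_meas hTm hTim hL hR (w ℓ)
    have hfreq : ∀ ε : ℝ≥0∞, ε ≠ 0 → ∀ L : ℕ,
        ∃ ℓ, L ≤ ℓ ∧ μ (((K.P ℓ).classTower (w ℓ))ᶜ) ≤ ε := by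
      intro ε hε L
      rcases le_or_gt 1 ε with h1 | h1
      · exact ⟨L, le_refl L, prob_le_one.trans h1⟩
      · have hlt : 1 - ε < limsup (fun ℓ => μ ((K.P ℓ).classTower (w ℓ))) atTop := by
          rw [hlimsup]
          exact ENNReal.sub_lt_self one_ne_top one_ne_zero hε
        have hfr := frequently_lt_of_lt_limsup (by isBoundedDefault) hlt
        obtain ⟨ℓ, hℓ1, hℓ2⟩ := (eventually_ge_atTop L).and_frequently hfr |>.exists
        refine ⟨ℓ, hℓ1, ?_⟩
        rw [prob_compl_eq_one_sub (hCm ℓ)]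
        rw [tsub_le_iff_right]
        calc (1:ℝ≥0∞) = (1 - ε) + ε := (tsub_add_cancel_of_le h1.le).symm
          _ ≤ μ ((K.P ℓ).classTower (w ℓ)) + ε := add_le_add_left hℓ2.le ε
          _ ≤ ε + μ ((K.P ℓ).classTower (w ℓ)) := by rw [add_comm]
    -- key estimate specialized
    have hkey : ∀ A : Set X, MeasurableSet A → ∀ δ : ℝ≥0∞, δ ≠ 0 →
        ∃ N : ℕ, ∀ ℓ : ℕ, N ≤ ℓ →
          μ A ≤ μ (A ∩ T^[m ℓ] ⁻¹' A) + δ / 2 + μ (((K.P ℓ).classTower (w ℓ))ᶜ) := by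
      intro A hA δ hδ
      obtain ⟨N, S, hSm, hSsat, hSd⟩ := K.approx hTim hL hR A hA (δ / 2 / 3)
        (by
          refine ENNReal.div_ne_zero.mpr ⟨ENNReal.div_ne_zero.mpr ⟨hδ, by norm_num⟩, by norm_num⟩)
      refine ⟨N, fun ℓ hNℓ => ?_⟩
      have hest := K.key_est hMP hA hSm hNℓ hSsat (m := m ℓ)
      have hcsub : ((K.P ℓ).classTower (w ℓ)) ⊆ (K.P ℓ).sameFloor (m ℓ) :=
        (K.P ℓ).classTower_subset_sameFloor
      have hcompl : μ (((K.P ℓ).sameFloor (m ℓ))ᶜ) ≤ μ (((K.P ℓ).classTower (w ℓ))ᶜ) :=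
        measure_mono (compl_subset_compl.mpr hcsub)
      have h3 : 3 * μ (symmDiff A S) ≤ δ / 2 := by
        calc 3 * μ (symmDiff A S) ≤ 3 * (δ / 2 / 3) := mul_le_mul_right hSd 3
          _ = δ / 2 := ENNReal.mul_div_cancel' (by norm_num) (by norm_num)
      calc μ A ≤ μ (A ∩ T^[m ℓ] ⁻¹' A) + 3 * μ (symmDiff A S) +
            μ (((K.P ℓ).sameFloor (m ℓ))ᶜ) := hest
        _ ≤ μ (A ∩ T^[m ℓ] ⁻¹' A) + δ / 2 + μ (((K.P ℓ).classTower (w ℓ))ᶜ) :=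
            add_le_add (add_le_add_right h3 _) hcompl
    by_cases hcase : ∃ m0 : ℕ, 0 < m0 ∧ ∀ A : Set X, MeasurableSet A →
        μ (A ∩ T^[m0] ⁻¹' A) = μ A
    · -- degenerate case : T^[m0] preserves every set a.e.
      obtain ⟨m0, hm0, hfix⟩ := hcase
      have haeA : ∀ A : Set X, MeasurableSet A → (T^[m0] ⁻¹' A : Set X) =ᵐ[μ] A := by
        intro A hA
        rw [ae_eq_set]
        constructor
        · have h3 : μ (T^[m0] ⁻¹' A) = μ A :=
            (hMP.iterate m0).measure_preimage hA.nullMeasurableSet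
          have h4 := measure_inter_add_diff (μ := μ) (T^[m0] ⁻¹' A) hA
          rw [h3, inter_comm, hfix A hA] at h4
          have h5 : μ A + μ (T^[m0] ⁻¹' A \ A) ≤ μ A + 0 := by rw [add_zero]; exact h4.le
          simpa using (ENNReal.add_le_add_iff_left (measure_ne_top μ A)).mp h5
        · have h2 := measure_inter_add_diff (μ := μ) A ((hMP.iterate m0).measurable hA)
          rw [hfix A hA] at h2
          have h5 : μ A + μ (A \ T^[m0] ⁻¹' A) ≤ μ A + 0 := by rw [add_zero]; exact h2.le
          simpa using (ENNReal.add_le_add_iff_left (measure_ne_top μ A)).mp h5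
      have hiter : ∀ A : Set X, MeasurableSet A → ∀ j : ℕ,
          (T^[j * m0] ⁻¹' A : Set X) =ᵐ[μ] A := by
        intro A hA j
        induction j with
        | zero => simp; exact Filter.EventuallyEq.rfl
        | succ j ih =>
          have heq : T^[(j+1) * m0] ⁻¹' A = T^[j * m0] ⁻¹' (T^[m0] ⁻¹' A) := by
            ext x
            simp only [mem_preimage, ← Function.iterate_add_apply]
            rw [show m0 + j * m0 = (j+1) * m0 by ring]
          rw [heq]
          exact ((hMP.iterate (j * m0)).quasiMeasurePreserving.preimage_ae_eq
            (haeA A hA)).trans ih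
      refine ⟨fun k => (k + 1) * m0, ?_, by simpa using hm0, ?_⟩
      · intro a b hab
        exact Nat.mul_lt_mul_of_lt_of_le (by omega) le_rfl hm0
      · intro A hA
        have hconst : ∀ k : ℕ, μ (A ∩ T^[(k+1) * m0] ⁻¹' A) = μ A := by
          intro k
          have hie : (T^[(k+1) * m0] ⁻¹' A ∩ A : Set X) =ᵐ[μ] (A ∩ A : Set X) :=
            (hiter A hA (k+1)).inter (Filter.EventuallyEq.refl _ A)
          calc μ (A ∩ T^[(k+1) * m0] ⁻¹' A) = μ (T^[(k+1) * m0] ⁻¹' A ∩ A) := by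
                rw [inter_comm]
            _ = μ (A ∩ A) := measure_congr hie
            _ = μ A := by rw [inter_self]
        simp only [hconst, ENNReal.ofReal_one, one_mul]
        rw [liminf_const]
    · -- main case: build a strictly increasing rigidity sequence
      push_neg at hcase
      have hclaim : ∀ (K0 L : ℕ) (ε : ℝ≥0∞), ε ≠ 0 →
          ∃ ℓ, L ≤ ℓ ∧ K0 < m ℓ ∧ μ (((K.P ℓ).classTower (w ℓ))ᶜ) ≤ ε := by
        by_contra hcon
        push_neg at hcon
        obtain ⟨K0, L, ε₀, hε₀, hbdd⟩ := hcon
        have hpick : ∀ j : ℕ, ∃ ℓ, max L j ≤ ℓ ∧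
            μ (((K.P ℓ).classTower (w ℓ))ᶜ) ≤ min ε₀ ((j : ℝ≥0∞) + 1)⁻¹ := by
          intro j
          exact hfreq _ (by
            simp only [ne_eq, lt_min_iff, min_eq_top]
            refine fun h => ?_
            rcases min_eq_iff.mp h with ⟨h1, -⟩ | ⟨h1, -⟩
            · exact hε₀ h1
            · exact (ENNReal.inv_ne_zero.mpr (by simp)) h1) (max L j)
        choose ℓf hℓf1 hℓf2 using hpick
        have hmle : ∀ j, m (ℓf j) ≤ K0 := by
          intro j
          by_contra hgt
          push_neg at hgt
          exact absurd ((hℓf2 j).trans (min_le_left _ _))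
            (not_le.mpr (hbdd (ℓf j) (le_trans (le_max_left _ _) (hℓf1 j)) hgt))
        have hfib : ∃ m0, m0 ≤ K0 ∧ {j : ℕ | m (ℓf j) = m0}.Infinite := by
          by_contra hfin
          push_neg at hfin
          have hbig : (Set.univ : Set ℕ) ⊆
              ⋃ m0 ∈ Finset.range (K0 + 1), {j : ℕ | m (ℓf j) = m0} := by
            intro j _
            simp only [mem_iUnion, Finset.mem_range, mem_setOf_eq]
            exact ⟨m (ℓf j), by have := hmle j; omega, rfl⟩
          have hfinu : (Set.univ : Set ℕ).Finite := by
            refine Set.Finite.subset (Set.Finite.biUnion (Finset.range (K0+1)).finite_toSet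
              (fun m0 hm0 => ?_)) hbig
            rw [← Set.not_infinite]
            exact fun h => h (hfin m0 (by simp at hm0; omega))
          exact Set.infinite_univ hfinu
        obtain ⟨m0, hm0K, hm0inf⟩ := hfib
        obtain ⟨j0, hj0⟩ := hm0inf.nonempty
        have hm0pos : 0 < m0 := hj0 ▸ hmpos (ℓf j0)
        -- show m0 works for all A, contradicting hcase
        obtain ⟨A, hA, hne⟩ := hcase m0 hm0pos
        refine absurd ?_ hne
        refine le_antisymm (measure_mono inter_subset_left) ?_
        refine ENNReal.le_of_forall_pos_le_add fun δ hδ _ => ?_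
        set δ' : ℝ≥0∞ := (δ : ℝ≥0∞) with hδ'def
        have hδ'ne : δ' ≠ 0 := ENNReal.coe_ne_zero.mpr hδ.ne'
        obtain ⟨N, hN⟩ := hkey A hA δ' hδ'ne
        obtain ⟨J, hJ⟩ := ENNReal.exists_inv_nat_lt (a := δ' / 2)
          (ENNReal.div_ne_zero.mpr ⟨hδ'ne, by norm_num⟩)
        obtain ⟨j, hjfib, hjnot⟩ :=
          hm0inf.exists_notMem_finite (Set.finite_Iio (max N J))
        simp only [mem_Iio, not_lt] at hjnot
        have hjN : N ≤ j := le_trans (le_max_left _ _) hjnot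
        have hjJ : J ≤ j := le_trans (le_max_right _ _) hjnot
        have hℓN : N ≤ ℓf j := le_trans hjN (le_trans (le_max_right _ _) (hℓf1 j))
        have hmeq : m (ℓf j) = m0 := hjfib
        have hcbound : μ (((K.P (ℓf j)).classTower (w (ℓf j)))ᶜ) ≤ δ' / 2 := by
          refine le_trans ((hℓf2 j).trans (min_le_right _ _)) ?_
          refine le_trans ?_ hJ.le
          exact ENNReal.inv_le_inv' (by exact_mod_cast by omega)
        have := hN (ℓf j) hℓN
        rw [hmeq] at this
        calc μ A ≤ μ (A ∩ T^[m0] ⁻¹' A) + δ' / 2 +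
              μ (((K.P (ℓf j)).classTower (w (ℓf j)))ᶜ) := this
          _ ≤ μ (A ∩ T^[m0] ⁻¹' A) + δ' / 2 + δ' / 2 := add_le_add_right hcbound _
          _ = μ (A ∩ T^[m0] ⁻¹' A) + δ' := by rw [add_assoc, ENNReal.add_halves]
      -- recursion
      choose F hF1 hF2 hF3 using fun (K0 L j : ℕ) =>
        hclaim K0 L ((j : ℝ≥0∞) + 1)⁻¹ (ENNReal.inv_ne_zero.mpr (by simp))
      let φ : ℕ → ℕ := fun j => Nat.rec (F 0 0 0) (fun j ih => F (m ih) (ih + 1) (j + 1)) j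
      have hφs : ∀ j, φ (j + 1) = F (m (φ j)) (φ j + 1) (j + 1) := fun j => rfl
      have hφmono : ∀ j, φ j < φ (j + 1) := by
        intro j
        rw [hφs j]
        exact lt_of_lt_of_le (Nat.lt_succ_self _) (hF1 _ _ _)
      have hφge : ∀ j, j ≤ φ j := by
        intro j
        induction j with
        | zero => exact Nat.zero_le _
        | succ j ih => exact lt_of_le_of_lt ih (hφmono j)
      have hmlt : ∀ j, m (φ j) < m (φ (j + 1)) := by
        intro j
        rw [hφs j]
        exact hF2 _ _ _
      have hcb : ∀ j, μ (((K.P (φ j)).classTower (w (φ j)))ᶜ) ≤ ((j : ℝ≥0∞) + 1)⁻¹ := by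
        intro j
        cases j with
        | zero => exact hF3 0 0 0
        | succ j => rw [hφs j]; exact hF3 _ _ _
      refine ⟨fun j => m (φ j), strictMono_nat_of_lt_succ hmlt, hmpos (φ 0), ?_⟩
      intro A hA
      simp only [ENNReal.ofReal_one, one_mul]
      have hmain : ∀ ε : ℝ≥0∞, ε ≠ 0 →
          μ A ≤ liminf (fun j => μ (A ∩ T^[m (φ j)] ⁻¹' A)) atTop + ε := by
        intro ε hε
        obtain ⟨N, hN⟩ := hkey A hA ε hε
        obtain ⟨J, hJ⟩ := ENNReal.exists_inv_nat_lt (a := ε / 2)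
          (ENNReal.div_ne_zero.mpr ⟨hε, by norm_num⟩)
        have hev : ∀ᶠ j in atTop, μ A - ε ≤ μ (A ∩ T^[m (φ j)] ⁻¹' A) := by
          filter_upwards [eventually_ge_atTop (max N J)] with j hj
          have hjN : N ≤ j := le_trans (le_max_left _ _) hj
          have hjJ : J ≤ j := le_trans (le_max_right _ _) hj
          have hbound : μ A ≤ μ (A ∩ T^[m (φ j)] ⁻¹' A) + ε := by
            calc μ A ≤ μ (A ∩ T^[m (φ j)] ⁻¹' A) + ε / 2 +
                  μ (((K.P (φ j)).classTower (w (φ j)))ᶜ) :=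
                    hN (φ j) (le_trans hjN (hφge j))
              _ ≤ μ (A ∩ T^[m (φ j)] ⁻¹' A) + ε / 2 + ε / 2 := by
                  refine add_le_add_right ?_ _
                  refine le_trans (hcb j) (le_trans ?_ hJ.le)
                  exact ENNReal.inv_le_inv' (by exact_mod_cast by omega)
              _ = μ (A ∩ T^[m (φ j)] ⁻¹' A) + ε := by rw [add_assoc, ENNReal.add_halves]
          exact tsub_le_iff_right.mpr hbound
        have hlim : μ A - ε ≤ liminf (fun j => μ (A ∩ T^[m (φ j)] ⁻¹' A)) atTop :=
          le_liminf_of_le (by isBoundedDefault) hev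
        exact le_trans le_tsub_add (add_le_add_left hlim ε)
      refine ENNReal.le_of_forall_pos_le_add fun δ hδ _ => ?_
      exact hmain (δ : ℝ≥0∞) (ENNReal.coe_ne_zero.mpr hδ.ne')
end

section
/- Let (X, 𝒳, μ, T) be a measure-preserving system and n ≥ 1. Then the n-fold product system (Xⁿ, 𝒳^{⊗n}, μ^{⊗n}, T × ⋯ × T) satisfies δ_{μ^{⊗n}} = (δ_μ)ⁿ. -/
open MeasureTheory Filter Set

section Aux

set_option linter.unusedSectionVars false

open scoped ENNReal NNReal symmDiff

lemma myliminf_finset_sum_le {ι : Type*} (s : Finset ι) (f : ι → ℕ → ℝ≥0∞) :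
    ∑ i ∈ s, Filter.liminf (f i) Filter.atTop
      ≤ Filter.liminf (fun k => ∑ i ∈ s, f i k) Filter.atTop := by
  simp only [liminf_eq_iSup_iInf_of_nat]
  calc ∑ i ∈ s, ⨆ m : ℕ, ⨅ j ≥ m, f i j
      = ⨆ m : ℕ, ∑ i ∈ s, ⨅ j ≥ m, f i j := by
        apply ENNReal.finsetSum_iSup_of_monotone
        intro i a b hab
        exact le_iInf₂ fun j hj => iInf₂_le j (hab.trans hj)
    _ ≤ ⨆ m : ℕ, ⨅ j ≥ m, ∑ i ∈ s, f i j :=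
        iSup_mono fun m => le_iInf₂ fun j hj => Finset.sum_le_sum fun i _ => iInf₂_le j hj

lemma myliminf_finset_prod_le {ι : Type*} (s : Finset ι) (f : ι → ℕ → ℝ≥0∞) :
    ∏ i ∈ s, Filter.liminf (f i) Filter.atTop
      ≤ Filter.liminf (fun k => ∏ i ∈ s, f i k) Filter.atTop := by
  classical
  induction s using Finset.induction_on with
  | empty => simp
  | insert a s ha ih =>
    rw [Finset.prod_insert ha]
    calc Filter.liminf (f a) atTop * ∏ i ∈ s, Filter.liminf (f i) atTop
        ≤ Filter.liminf (f a) atTop * Filter.liminf (fun k => ∏ i ∈ s, f i k) atTop :=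
          mul_le_mul_of_nonneg_left ih zero_le
      _ ≤ Filter.liminf (fun k => f a k * ∏ i ∈ s, f i k) atTop := ENNReal.le_liminf_mul
      _ = Filter.liminf (fun k => ∏ i ∈ insert a s, f i k) atTop := by
          simp [Finset.prod_insert ha]

lemma myliminf_add_const (f : ℕ → ℝ≥0∞) (c : ℝ≥0∞) :
    Filter.liminf (fun k => f k + c) Filter.atTop = Filter.liminf f Filter.atTop + c := by
  simp only [liminf_eq_iSup_iInf_of_nat]
  rw [ENNReal.iSup_add]
  refine iSup_congr fun m => ?_
  have h1 : (⨅ j ≥ m, (f j + c)) = (⨅ j : {j : ℕ // j ≥ m}, f j) + c := by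
    rw [ENNReal.iInf_add (ι := {j : ℕ // j ≥ m})]
    exact iInf_subtype'
  rw [h1, iInf_subtype']

variable {X : Type*} [MeasurableSpace X]

lemma piMap_iterate (T : X → X) (n p : ℕ) :
    (fun (x : Fin n → X) i => T (x i))^[p] = fun x i => T^[p] (x i) := by
  induction p with
  | zero => rfl
  | succ p ih =>
    funext x
    rw [Function.iterate_succ_apply', ih]
    funext i
    rw [Function.iterate_succ_apply']

lemma rigid_box (μ : Measure X) [SigmaFinite μ] (T : X → X) {γ : ℝ} {m : ℕ → ℕ} {n : ℕ}
    (hm : ∀ A : Set X, MeasurableSet A →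
      ENNReal.ofReal γ * μ A ≤ Filter.liminf (fun k => μ (A ∩ T^[m k] ⁻¹' A)) Filter.atTop)
    (A : Fin n → Set X) (hA : ∀ i, MeasurableSet (A i)) :
    (ENNReal.ofReal γ) ^ n * (Measure.pi fun _ : Fin n => μ) (univ.pi A)
      ≤ Filter.liminf (fun k => (Measure.pi fun _ : Fin n => μ)
          (univ.pi A ∩ ((fun (x : Fin n → X) i => T (x i))^[m k]) ⁻¹' univ.pi A))
          Filter.atTop := by
  have hpre : ∀ p : ℕ,
      (univ.pi A ∩ ((fun (x : Fin n → X) i => T (x i))^[p]) ⁻¹' univ.pi A)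
        = univ.pi (fun i => A i ∩ T^[p] ⁻¹' A i) := by
    intro p
    rw [piMap_iterate]
    ext x
    simp only [Set.mem_inter_iff, Set.mem_univ_pi, Set.mem_preimage]
    exact ⟨fun h i => ⟨h.1 i, h.2 i⟩, fun h => ⟨fun i => (h i).1, fun i => (h i).2⟩⟩
  have hpp : ∀ B : Fin n → Set X,
      (Measure.pi fun _ : Fin n => μ) (univ.pi B) = ∏ i : Fin n, μ (B i) :=
    fun B => Measure.pi_pi _ _
  simp only [hpre, hpp]
  calc (ENNReal.ofReal γ) ^ n * ∏ i : Fin n, μ (A i)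
      = ∏ i : Fin n, (ENNReal.ofReal γ * μ (A i)) := by
        rw [Finset.prod_mul_distrib, Finset.prod_const, Finset.card_univ, Fintype.card_fin]
    _ ≤ ∏ i : Fin n, Filter.liminf (fun k => μ (A i ∩ T^[m k] ⁻¹' A i)) Filter.atTop :=
        Finset.prod_le_prod' fun i _ => hm (A i) (hA i)
    _ ≤ _ := myliminf_finset_prod_le _ _

lemma measurable_piMap {T : X → X} (hT : Measurable T) (n : ℕ) :
    Measurable (fun (x : Fin n → X) i => T (x i)) :=
  measurable_pi_lambda _ fun i => hT.comp (measurable_pi_apply i)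

lemma rigid_finUnion (μ : Measure X) [SigmaFinite μ] {T : X → X} (hTm : Measurable T)
    {γ : ℝ} {m : ℕ → ℕ} {n : ℕ}
    (hm : ∀ A : Set X, MeasurableSet A →
      ENNReal.ofReal γ * μ A ≤ Filter.liminf (fun k => μ (A ∩ T^[m k] ⁻¹' A)) Filter.atTop)
    {ι : Type*} [Fintype ι] (f : ι → Fin n → Set X) (hf : ∀ j i, MeasurableSet (f j i)) :
    (ENNReal.ofReal γ) ^ n * (Measure.pi fun _ : Fin n => μ) (⋃ j, univ.pi (f j))
      ≤ Filter.liminf (fun k => (Measure.pi fun _ : Fin n => μ)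
          ((⋃ j, univ.pi (f j)) ∩ ((fun (x : Fin n → X) i => T (x i))^[m k]) ⁻¹'
            (⋃ j, univ.pi (f j)))) Filter.atTop := by
  classical
  set ν : Measure (Fin n → X) := Measure.pi fun _ : Fin n => μ with hνdef
  set S : (Fin n → X) → (Fin n → X) := fun x i => T (x i) with hSdef
  set B : Set (Fin n → X) := ⋃ j, univ.pi (f j) with hBdef
  set g : (Fin n → ι → Bool) → Fin n → Set X :=
    fun σ i => ⋂ j, if σ i j then f j i else (f j i)ᶜ with hgdef
  have hg : ∀ σ i, MeasurableSet (g σ i) := by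
    intro σ i
    apply MeasurableSet.iInter
    intro j
    by_cases h : σ i j <;> simp [h, hf j i, (hf j i).compl]
  set C : (Fin n → ι → Bool) → Set (Fin n → X) := fun σ => univ.pi (g σ) with hCdef
  have hC : ∀ σ, MeasurableSet (C σ) := fun σ => MeasurableSet.univ_pi (hg σ)
  have hmemC : ∀ σ x, x ∈ C σ ↔ ∀ i j, x i ∈ (if σ i j then f j i else (f j i)ᶜ) := by
    intro σ x
    simp only [hCdef, hgdef, Set.mem_univ_pi, Set.mem_iInter]
  have hdisj : ∀ σ τ, σ ≠ τ → Disjoint (C σ) (C τ) := by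
    intro σ τ hne
    rw [Set.disjoint_left]
    intro x hxσ hxτ
    apply hne
    funext i j
    have h1 := (hmemC σ x).1 hxσ i j
    have h2 := (hmemC τ x).1 hxτ i j
    by_contra hij
    cases hσ : σ i j <;> cases hτ : τ i j <;>
      simp_all [hσ, hτ]
  set Sig : Finset (Fin n → ι → Bool) :=
    Finset.univ.filter (fun σ => ∃ j, ∀ i, σ i j = true) with hSigdef
  have hsub : ∀ σ ∈ Sig, C σ ⊆ B := by
    intro σ hσ
    rw [hSigdef, Finset.mem_filter] at hσ
    obtain ⟨-, j, hj⟩ := hσ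
    intro x hx
    apply Set.mem_iUnion.2 ⟨j, ?_⟩
    intro i _
    have := (hmemC σ x).1 hx i j
    rwa [hj i, if_pos rfl] at this
  have hcover : B = ⋃ σ ∈ Sig, C σ := by
    apply Set.Subset.antisymm
    · intro x hx
      obtain ⟨j₀, hj₀⟩ := Set.mem_iUnion.1 hx
      have h1 : (fun i j => decide (x i ∈ f j i)) ∈ Sig := by
        rw [hSigdef, Finset.mem_filter]
        exact ⟨Finset.mem_univ _, j₀, fun i => decide_eq_true (hj₀ i (Set.mem_univ i))⟩
      have h2 : x ∈ C (fun i j => decide (x i ∈ f j i)) := by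
        rw [hmemC]
        intro i j
        by_cases h : x i ∈ f j i <;> simp [h]
      exact Set.mem_iUnion₂.2 ⟨_, h1, h2⟩
    · exact Set.iUnion₂_subset hsub
  have hSm : Measurable S := measurable_piMap hTm n
  have hBmeas : ν B = ∑ σ ∈ Sig, ν (C σ) := by
    rw [hcover, measure_biUnion_finset ?_ (fun σ _ => hC σ)]
    intro σ hσ τ hτ hst
    exact hdisj σ τ hst
  have hlow : ∀ p : ℕ, ∑ σ ∈ Sig, ν (C σ ∩ (S^[p]) ⁻¹' C σ) ≤ ν (B ∩ (S^[p]) ⁻¹' B) := by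
    intro p
    rw [← measure_biUnion_finset]
    · apply measure_mono
      apply Set.iUnion₂_subset
      intro σ hσ
      exact Set.inter_subset_inter (hsub σ hσ) (Set.preimage_mono (hsub σ hσ))
    · intro σ hσ τ hτ hst
      exact ((hdisj σ τ hst).mono Set.inter_subset_left Set.inter_subset_left)
    · exact fun σ _ => (hC σ).inter ((hSm.iterate p) (hC σ))
  calc (ENNReal.ofReal γ) ^ n * ν B
      = ∑ σ ∈ Sig, (ENNReal.ofReal γ) ^ n * ν (C σ) := by rw [hBmeas, Finset.mul_sum]
    _ ≤ ∑ σ ∈ Sig, Filter.liminf (fun k => ν (C σ ∩ (S^[m k]) ⁻¹' C σ)) Filter.atTop :=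
        Finset.sum_le_sum fun σ _ => rigid_box μ T hm (g σ) (hg σ)
    _ ≤ Filter.liminf (fun k => ∑ σ ∈ Sig, ν (C σ ∩ (S^[m k]) ⁻¹' C σ)) Filter.atTop :=
        myliminf_finset_sum_le _ _
    _ ≤ Filter.liminf (fun k => ν (B ∩ (S^[m k]) ⁻¹' B)) Filter.atTop :=
        liminf_le_liminf (Filter.Eventually.of_forall fun k => hlow (m k))

def FinUB (X : Type*) [MeasurableSpace X] (n : ℕ) : Set (Set (Fin n → X)) :=
  {s | ∃ (ι : Type) (_ : Fintype ι) (f : ι → Fin n → Set X),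
    (∀ j i, MeasurableSet (f j i)) ∧ s = ⋃ j, univ.pi (f j)}

lemma finUB_isSetAlgebra (n : ℕ) : MeasureTheory.IsSetAlgebra (FinUB X n) := by
  classical
  constructor
  · exact ⟨PEmpty, inferInstance, fun j => j.elim, fun j => j.elim, by simp⟩
  · rintro s ⟨ι, hι, f, hf, rfl⟩
    haveI := hι
    -- complement of a union of boxes
    set δ : ι → Fin n → Fin n → Set X :=
      fun j i i' => if i' = i then (f j i)ᶜ else univ with hδdef
    have hδm : ∀ j i i', MeasurableSet (δ j i i') := by
      intro j i i'
      rw [hδdef]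
      dsimp only
      split
      · exact (hf j i).compl
      · exact MeasurableSet.univ
    have hboxc : ∀ j, (univ.pi (f j))ᶜ = ⋃ i : Fin n, univ.pi (δ j i) := by
      intro j
      ext x
      simp only [Set.mem_compl_iff, Set.mem_univ_pi, Set.mem_iUnion, hδdef, not_forall]
      constructor
      · rintro ⟨i, hi⟩
        refine ⟨i, fun i' => ?_⟩
        by_cases h : i' = i
        · subst h; simp [hi]
        · simp [h]
      · rintro ⟨i, hi⟩
        refine ⟨i, ?_⟩
        have := hi i
        simpa using this
    refine ⟨ι → Fin n, inferInstance, fun c i => ⋂ j, δ j (c j) i, ?_, ?_⟩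
    · intro c i
      exact MeasurableSet.iInter fun j => hδm j (c j) i
    · rw [Set.compl_iUnion]
      have h1 : ∀ c : ι → Fin n, univ.pi (fun i => ⋂ j, δ j (c j) i)
          = ⋂ j, univ.pi (δ j (c j)) := by
        intro c
        ext x
        simp only [Set.mem_univ_pi, Set.mem_iInter]
        exact forall_comm
      calc ⋂ j, (univ.pi (f j))ᶜ = ⋂ j, ⋃ i : Fin n, univ.pi (δ j i) := by
            simp only [hboxc]
        _ = ⋃ c : ι → Fin n, ⋂ j, univ.pi (δ j (c j)) := iInf_iSup_eq
        _ = ⋃ c : ι → Fin n, univ.pi (fun i => ⋂ j, δ j (c j) i) := by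
            simp only [h1]
  · rintro s t ⟨ι, hι, f, hf, rfl⟩ ⟨ι', hι', f', hf', rfl⟩
    haveI := hι; haveI := hι'
    refine ⟨ι ⊕ ι', inferInstance, Sum.elim f f', ?_, ?_⟩
    · rintro (j | j) i
      · exact hf j i
      · exact hf' j i
    · rw [Set.iUnion_sum]
      simp

lemma finUB_box {n : ℕ} {A : Fin n → Set X} (hA : ∀ i, MeasurableSet (A i)) :
    univ.pi A ∈ FinUB X n :=
  ⟨PUnit, inferInstance, fun _ => A, fun _ => hA, by rw [Set.iUnion_const]⟩

lemma pi_eq_generateFrom_finUB (n : ℕ) :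
    (MeasurableSpace.pi : MeasurableSpace (Fin n → X))
      = MeasurableSpace.generateFrom (FinUB X n) := by
  apply le_antisymm
  · have h : ∀ i : Fin n,
        @Measurable _ _ (MeasurableSpace.generateFrom (FinUB X n)) _
          (fun x : Fin n → X => x i) := by
      intro i A hA
      apply MeasurableSpace.measurableSet_generateFrom
      refine ⟨PUnit, inferInstance, fun _ i' => if i' = i then A else univ, ?_, ?_⟩
      · intro _ i'
        dsimp only
        split
        · exact hA
        · exact MeasurableSet.univ
      · rw [Set.iUnion_const]
        ext x
        simp only [Set.mem_preimage, Set.mem_univ_pi]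
        constructor
        · intro hx i'
          by_cases h : i' = i
          · subst h; simp [hx]
          · simp [h]
        · intro hx
          have := hx i
          simpa using this
    intro s hs
    have h2 : @Measurable (Fin n → X) (Fin n → X)
        (MeasurableSpace.generateFrom (FinUB X n)) MeasurableSpace.pi (fun x => x) :=
      (@measurable_pi_iff (Fin n → X) (Fin n) (fun _ => X)
        (MeasurableSpace.generateFrom (FinUB X n)) _ (fun x => x)).2 h
    exact h2 hs
  · apply MeasurableSpace.generateFrom_le
    rintro t ⟨ι, hι, f, hf, rfl⟩
    haveI := hι
    exact MeasurableSet.iUnion fun j => MeasurableSet.univ_pi (hf j)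

lemma isPartiallyRigidSeq_pi (μ : Measure X) [IsProbabilityMeasure μ] {T : X → X}
    (hT : MeasurePreserving T μ μ) {γ : ℝ} (hγ0 : 0 ≤ γ) (hγ1 : γ ≤ 1) {m : ℕ → ℕ}
    (h : IsPartiallyRigidSeq μ T γ m) (n : ℕ) :
    IsPartiallyRigidSeq (Measure.pi fun _ : Fin n => μ) (fun x i => T (x i)) (γ ^ n) m := by
  obtain ⟨h1, h2, h3⟩ := h
  refine ⟨h1, h2, fun A hA => ?_⟩
  set ν : Measure (Fin n → X) := Measure.pi fun _ : Fin n => μ with hν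
  set S : (Fin n → X) → Fin n → X := fun x i => T (x i) with hS
  haveI : IsProbabilityMeasure ν := by rw [hν]; infer_instance
  have hSp : MeasurePreserving S ν ν := measurePreserving_pi _ _ (fun _ => hT)
  set L := Filter.liminf (fun k => ν (A ∩ (S^[m k]) ⁻¹' A)) Filter.atTop with hL
  have hdense := Measure.MeasureDense.of_generateFrom_isSetAlgebra_finite (μ := ν)
    (finUB_isSetAlgebra n) (pi_eq_generateFrom_finUB n)
  have key : ∀ ε : ℝ, 0 < ε →
      ENNReal.ofReal (γ ^ n) * ν A ≤ L + 3 * ENNReal.ofReal ε := by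
    intro ε hε
    obtain ⟨B₀, hB𝒜, hBerr⟩ := hdense.approx A hA (measure_ne_top ν A) ε hε
    obtain ⟨ι, hι, f, hf, rfl⟩ := hB𝒜
    haveI := hι
    set B : Set (Fin n → X) := ⋃ j, univ.pi (f j) with hB
    have hBmeas : MeasurableSet B := MeasurableSet.iUnion fun j => MeasurableSet.univ_pi (hf j)
    set e := ENNReal.ofReal ε with he
    have hAB : ν A ≤ ν B + e := by
      have hsub : A ⊆ B ∪ (A ∆ B) := by
        intro x hx
        by_cases hxB : x ∈ B
        · exact Or.inl hxB
        · exact Or.inr (Set.mem_symmDiff.2 (Or.inl ⟨hx, hxB⟩))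
      calc ν A ≤ ν (B ∪ (A ∆ B)) := measure_mono hsub
        _ ≤ ν B + ν (A ∆ B) := measure_union_le _ _
        _ ≤ ν B + e := add_le_add_right hBerr.le _
    have hBA : ν (B \ A) ≤ e := by
      refine le_trans (measure_mono ?_) hBerr.le
      intro x hx
      exact Set.mem_symmDiff.2 (Or.inr ⟨hx.1, hx.2⟩)
    have hpoint : ∀ p : ℕ, ν (B ∩ (S^[p]) ⁻¹' B) ≤ ν (A ∩ (S^[p]) ⁻¹' A) + (e + e) := by
      intro p
      have hpre : ν ((S^[p]) ⁻¹' (B \ A)) = ν (B \ A) :=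
        (hSp.iterate p).measure_preimage (hBmeas.diff hA).nullMeasurableSet
      have hsub2 : B ∩ (S^[p]) ⁻¹' B
          ⊆ (A ∩ (S^[p]) ⁻¹' A) ∪ ((B \ A) ∪ (S^[p]) ⁻¹' (B \ A)) := by
        rintro x ⟨hxB, hxB'⟩
        by_cases hx1 : x ∈ A
        · by_cases hx2 : S^[p] x ∈ A
          · exact Or.inl ⟨hx1, hx2⟩
          · exact Or.inr (Or.inr ⟨hxB', hx2⟩)
        · exact Or.inr (Or.inl ⟨hxB, hx1⟩)
      calc ν (B ∩ (S^[p]) ⁻¹' B)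
          ≤ ν (A ∩ (S^[p]) ⁻¹' A) + ν ((B \ A) ∪ (S^[p]) ⁻¹' (B \ A)) :=
            le_trans (measure_mono hsub2) (measure_union_le _ _)
        _ ≤ ν (A ∩ (S^[p]) ⁻¹' A) + (ν (B \ A) + ν ((S^[p]) ⁻¹' (B \ A))) :=
            add_le_add_right (measure_union_le _ _) _
        _ ≤ ν (A ∩ (S^[p]) ⁻¹' A) + (e + e) := by
            rw [hpre]
            exact add_le_add_right (add_le_add hBA hBA) _
    have hrig := rigid_finUnion μ hT.measurable h3 f hf
    rw [← hν, ← hS] at hrig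
    rw [← hB] at hrig
    calc ENNReal.ofReal (γ ^ n) * ν A
        = (ENNReal.ofReal γ) ^ n * ν A := by rw [ENNReal.ofReal_pow hγ0]
      _ ≤ (ENNReal.ofReal γ) ^ n * (ν B + e) := mul_le_mul_of_nonneg_left hAB (zero_le)
      _ = (ENNReal.ofReal γ) ^ n * ν B + (ENNReal.ofReal γ) ^ n * e := mul_add _ _ _
      _ ≤ Filter.liminf (fun k => ν (B ∩ (S^[m k]) ⁻¹' B)) Filter.atTop + e := by
          refine add_le_add hrig ?_
          calc (ENNReal.ofReal γ) ^ n * e ≤ 1 * e :=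
                mul_le_mul_of_nonneg_right (pow_le_one' (ENNReal.ofReal_le_one.2 hγ1) n) zero_le
            _ = e := one_mul e
      _ ≤ Filter.liminf (fun k => ν (A ∩ (S^[m k]) ⁻¹' A) + (e + e)) Filter.atTop + e :=
          add_le_add_left
            (liminf_le_liminf (Filter.Eventually.of_forall fun k => hpoint (m k))) e
      _ = L + (e + e) + e := by rw [myliminf_add_const]
      _ = L + 3 * e := by ring
  apply ENNReal.le_of_forall_pos_le_add
  intro ε hε hLtop
  have hεpos : 0 < (ε : ℝ) / 3 := by
    have : (0 : ℝ) < (ε : ℝ) := by exact_mod_cast hε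
    linarith
  have h3e : (3 : ℝ≥0∞) * ENNReal.ofReal ((ε : ℝ) / 3) = (ε : ℝ≥0∞) := by
    rw [show (3 : ℝ≥0∞) = ENNReal.ofReal (3 : ℝ) by norm_num]
    rw [← ENNReal.ofReal_mul (by norm_num : (0:ℝ) ≤ 3)]
    rw [show (3 : ℝ) * ((ε : ℝ) / 3) = (ε : ℝ) by ring]
    exact ENNReal.ofReal_coe_nnreal
  have hkey := key ((ε : ℝ) / 3) hεpos
  rwa [h3e] at hkey

lemma isPartiallyRigidSeq_of_pi (μ : Measure X) [IsProbabilityMeasure μ] {T : X → X}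
    {γ : ℝ} (hγ0 : 0 < γ) {m : ℕ → ℕ} {n : ℕ} (hn : 1 ≤ n)
    (h : IsPartiallyRigidSeq (Measure.pi fun _ : Fin n => μ) (fun x i => T (x i)) γ m) :
    IsPartiallyRigidSeq μ T (γ ^ (n⁻¹ : ℝ)) m := by
  obtain ⟨h1, h2, h3⟩ := h
  refine ⟨h1, h2, fun A hA => ?_⟩
  set L := Filter.liminf (fun k => μ (A ∩ T^[m k] ⁻¹' A)) Filter.atTop with hL
  set c₀ := ENNReal.ofReal (γ ^ (n⁻¹ : ℝ)) * μ A with hc₀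
  by_contra hcon
  push_neg at hcon
  obtain ⟨c, hLc, hcc⟩ := exists_between hcon
  have hbox := h3 (univ.pi fun _ : Fin n => A) (MeasurableSet.univ_pi fun _ => hA)
  have hpre : ∀ p : ℕ, ((univ.pi fun _ : Fin n => A) ∩
      ((fun (x : Fin n → X) i => T (x i))^[p]) ⁻¹' (univ.pi fun _ : Fin n => A))
        = univ.pi (fun _ : Fin n => A ∩ T^[p] ⁻¹' A) := by
    intro p
    rw [piMap_iterate]
    ext x
    simp only [Set.mem_inter_iff, Set.mem_univ_pi, Set.mem_preimage]
    exact ⟨fun hx i => ⟨hx.1 i, hx.2 i⟩, fun hx => ⟨fun i => (hx i).1, fun i => (hx i).2⟩⟩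
  have hval : ∀ p, (Measure.pi fun _ : Fin n => μ)
      ((univ.pi fun _ : Fin n => A) ∩
        ((fun (x : Fin n → X) i => T (x i))^[p]) ⁻¹' (univ.pi fun _ : Fin n => A))
        = (μ (A ∩ T^[p] ⁻¹' A)) ^ n := by
    intro p
    rw [hpre p, Measure.pi_pi]
    simp
  have hμA : (Measure.pi fun _ : Fin n => μ) (univ.pi fun _ : Fin n => A) = (μ A) ^ n := by
    rw [Measure.pi_pi]
    simp
  rw [hμA] at hbox
  simp only [hval] at hbox
  have hfreq : ∃ᶠ k in Filter.atTop, μ (A ∩ T^[m k] ⁻¹' A) < c :=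
    frequently_lt_of_liminf_lt (by isBoundedDefault) hLc
  have hup : Filter.liminf (fun k => (μ (A ∩ T^[m k] ⁻¹' A)) ^ n) Filter.atTop ≤ c ^ n :=
    liminf_le_of_frequently_le' (hfreq.mono fun k hk => pow_le_pow_left' hk.le n)
  have hcpow : c ^ n < c₀ ^ n := (ENNReal.pow_lt_pow_left_iff (by omega)).2 hcc
  have hrn : ((γ ^ (n⁻¹ : ℝ)) : ℝ) ^ n = γ := Real.rpow_inv_natCast_pow hγ0.le (by omega)
  have hc₀pow : c₀ ^ n = ENNReal.ofReal γ * (μ A) ^ n := by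
    rw [hc₀, mul_pow, ← ENNReal.ofReal_pow (Real.rpow_nonneg hγ0.le _), hrn]
  have hfin : ENNReal.ofReal γ * (μ A) ^ n ≤ c ^ n := hbox.trans hup
  rw [← hc₀pow] at hfin
  exact absurd (lt_of_le_of_lt hfin hcpow) (lt_irrefl _)

end Aux

/-- The partial rigidity rate of the `n`-fold product system is the `n`-th power of the
partial rigidity rate: `δ_{μ^{⊗n}} = (δ_μ)ⁿ`. -/
theorem partialRigidityRate_pi
    {X : Type*} [MeasurableSpace X] [StandardBorelSpace X]
    (μ : Measure X) [IsProbabilityMeasure μ] (T : X → X)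
    (hT : MeasurePreserving T μ μ)
    (hTinv : ∃ Tinv : X → X, Measurable Tinv ∧
      Function.LeftInverse Tinv T ∧ Function.RightInverse Tinv T)
    (n : ℕ) (hn : 1 ≤ n) :
    partialRigidityRate (Measure.pi fun _ : Fin n => μ) (fun x i => T (x i)) =
      (partialRigidityRate μ T) ^ n := by
  classical
  rw [partialRigidityRate, partialRigidityRate]
  set P := {γ : ℝ | γ ∈ Set.Ioc (0 : ℝ) 1 ∧ IsPartiallyRigid μ T γ} with hP
  set Q := {γ : ℝ | γ ∈ Set.Ioc (0 : ℝ) 1 ∧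
    IsPartiallyRigid (Measure.pi fun _ : Fin n => μ) (fun x i => T (x i)) γ} with hQ
  have hn0 : n ≠ 0 := by omega
  have hPQ : ∀ γ ∈ P, γ ^ n ∈ Q := by
    rintro γ ⟨⟨hγ0, hγ1⟩, mseq, hseq⟩
    exact ⟨⟨pow_pos hγ0 n, pow_le_one₀ hγ0.le hγ1⟩, mseq,
      isPartiallyRigidSeq_pi μ hT hγ0.le hγ1 hseq n⟩
  have hQP : ∀ γ ∈ Q, γ ^ (n⁻¹ : ℝ) ∈ P := by
    rintro γ ⟨⟨hγ0, hγ1⟩, mseq, hseq⟩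
    exact ⟨⟨Real.rpow_pos_of_pos hγ0 _, Real.rpow_le_one hγ0.le hγ1 (by positivity)⟩,
      mseq, isPartiallyRigidSeq_of_pi μ hγ0 hn hseq⟩
  have hbddP : BddAbove P := ⟨1, fun x hx => hx.1.2⟩
  have hbddQ : BddAbove Q := ⟨1, fun x hx => hx.1.2⟩
  rcases P.eq_empty_or_nonempty with hPe | ⟨γ₀, hγ₀⟩
  · have hQe : Q = ∅ := by
      rw [Set.eq_empty_iff_forall_notMem]
      intro γ hγ
      have h := hQP γ hγ
      rw [hPe] at h
      exact h
    rw [hPe, hQe, Real.sSup_empty, zero_pow hn0]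
  · have hQne : Q.Nonempty := ⟨γ₀ ^ n, hPQ γ₀ hγ₀⟩
    have hP0 : 0 ≤ sSup P := hγ₀.1.1.le.trans (le_csSup hbddP hγ₀)
    have hQ0 : 0 ≤ sSup Q := (pow_pos hγ₀.1.1 n).le.trans (le_csSup hbddQ (hPQ γ₀ hγ₀))
    apply le_antisymm
    · apply csSup_le hQne
      intro γ hγ
      have h1 : γ ^ (n⁻¹ : ℝ) ≤ sSup P := le_csSup hbddP (hQP γ hγ)
      calc γ = (γ ^ (n⁻¹ : ℝ)) ^ n := (Real.rpow_inv_natCast_pow hγ.1.1.le hn0).symm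
        _ ≤ (sSup P) ^ n := pow_le_pow_left₀ (Real.rpow_nonneg hγ.1.1.le _) h1 n
    · have hsP : sSup P ≤ (sSup Q) ^ (n⁻¹ : ℝ) := by
        apply csSup_le ⟨γ₀, hγ₀⟩
        intro γ hγ
        have h2 : γ ^ n ≤ sSup Q := le_csSup hbddQ (hPQ γ hγ)
        calc γ = (γ ^ n) ^ (n⁻¹ : ℝ) := (Real.pow_rpow_inv_natCast hγ.1.1.le hn0).symm
          _ ≤ (sSup Q) ^ (n⁻¹ : ℝ) :=
            Real.rpow_le_rpow (pow_nonneg hγ.1.1.le n) h2 (by positivity)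
      calc (sSup P) ^ n ≤ ((sSup Q) ^ (n⁻¹ : ℝ)) ^ n := pow_le_pow_left₀ hP0 hsP n
        _ = sSup Q := Real.rpow_inv_natCast_pow hQ0 hn0
end
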